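/- Let q = 2^r with r a positive integer and let β ∈ 𝔽_q. Then the number of w ∈ O⁺(2,q) with matrix trace Tr w = β equals q if β = 0; equals 2 if β ≠ 0 and tr(β^{−1}) = 0; and equals 0 if β ≠ 0 and tr(β^{−1}) = 1. -/

import Mathlib

open Finset Matrix

/-- The quadratic form `θ⁺(x) = ∑ i, x_i x_{n+i}` on `F^{2n}` (columns indexed by `Fin n ⊕ Fin n`). -/
def thetaPlus (F : Type) [Field F] (n : ℕ) (x : Fin n ⊕ Fin n → F) : F :=
  ∑ i : Fin n, x (Sum.inl i) * x (Sum.inr i)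

/-- The orthogonal group `O⁺(2n,q)`: invertible matrices preserving `θ⁺`. -/
noncomputable def OplusGrp (F : Type) [Field F] [Fintype F] [DecidableEq F] (n : ℕ) :
    Finset (Matrix (Fin n ⊕ Fin n) (Fin n ⊕ Fin n) F) := by
  classical
  exact Finset.univ.filter (fun w => IsUnit w ∧
    ∀ x : Fin n ⊕ Fin n → F, thetaPlus F n (w.mulVec x) = thetaPlus F n x)

/-- `SO⁺(2n,q)`: the kernel of `δ⁺(w) = Tr(B ᵗC)` on `O⁺(2n,q)`,
where `w = [[A,B],[C,D]]` in `n × n` blocks. -/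
noncomputable def SOplusGrp (F : Type) [Field F] [Fintype F] [DecidableEq F] (n : ℕ) :
    Finset (Matrix (Fin n ⊕ Fin n) (Fin n ⊕ Fin n) F) := by
  classical
  exact (OplusGrp F n).filter
    (fun w => Matrix.trace (Matrix.toBlocks₁₂ w * (Matrix.toBlocks₂₁ w)ᵀ) = 0)

/-- The trace map `tr(x) = x + x² + ⋯ + x^{2^{r−1}}`, valued in `𝔽₂ = {0,1} ⊆ F`. -/
def trF (F : Type) [Field F] (r : ℕ) (x : F) : F := ∑ i ∈ Finset.range r, x ^ 2 ^ i

/-- The canonical additive character `λ(x) = (−1)^{tr(x)} ∈ {±1} ⊆ ℤ`. -/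
noncomputable def lam (F : Type) [Field F] (r : ℕ) (x : F) : ℤ := by
  classical exact if trF F r x = 0 then 1 else -1

/-- The trace map `tr` viewed as a function into `𝔽₂ = ZMod 2`. -/
noncomputable def tr2 (F : Type) [Field F] (r : ℕ) (x : F) : ZMod 2 := by
  classical exact if trF F r x = 0 then 0 else 1

/-- The Kloosterman sum `K(λ;a) = ∑_{α ∈ F*} λ(α + aα⁻¹)`. -/
noncomputable def Kl (F : Type) [Field F] [Fintype F] (r : ℕ) (a : F) : ℤ := by
  classical
  exact ∑ α ∈ Finset.univ.filter (fun α : F => α ≠ 0), lam F r (α + a * α⁻¹)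

/-- The `m`-dimensional Kloosterman sum
`K_m(λ;a) = ∑_{α₁,…,α_m ∈ F*} λ(α₁ + ⋯ + α_m + aα₁⁻¹⋯α_m⁻¹)`;
for `m = 0` this is `K₀(λ;a) = λ(a)`. -/
noncomputable def Klm (F : Type) [Field F] [Fintype F] (r m : ℕ) (a : F) : ℤ := by
  classical
  exact ∑ v ∈ Finset.univ.filter (fun v : Fin m → F => ∀ i, v i ≠ 0),
    lam F r ((∑ i, v i) + a * (∏ i, v i)⁻¹)

/-- The power moment `MK^h = ∑_{a ∈ F*} K(λ;a)^h`. -/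
noncomputable def MK (F : Type) [Field F] [Fintype F] (r h : ℕ) : ℤ := by
  classical exact ∑ a ∈ Finset.univ.filter (fun a : F => a ≠ 0), (Kl F r a) ^ h

/-- The power moment `MK₂^h = ∑_{a ∈ F*} K₂(λ;a)^h` of 2-dimensional Kloosterman sums. -/
noncomputable def MK2 (F : Type) [Field F] [Fintype F] (r h : ℕ) : ℤ := by
  classical exact ∑ a ∈ Finset.univ.filter (fun a : F => a ≠ 0), (Klm F r 2 a) ^ h

/-- The binary code `C(G) = {u ∈ 𝔽₂^G : ∑_{g ∈ G} u_g Tr(g) = 0 in F}`. -/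
noncomputable def code (F : Type) [Field F] [Fintype F] [DecidableEq F]
    {ι : Type} [Fintype ι] [DecidableEq ι] (G : Finset (Matrix ι ι F)) :
    Finset (↥G → ZMod 2) := by
  classical
  exact Finset.univ.filter
    (fun u => ∑ g : ↥G, (u g).val • Matrix.trace (g : Matrix ι ι F) = 0)

/-- Number of codewords of Hamming weight `j` in the code `C(G)`. -/
noncomputable def wtCount (F : Type) [Field F] [Fintype F] [DecidableEq F]
    {ι : Type} [Fintype ι] [DecidableEq ι] (G : Finset (Matrix ι ι F)) (j : ℕ) : ℕ := by
  classical
  exact ((code F G).filter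
    (fun u => (Finset.univ.filter (fun g : ↥G => u g = 1)).card = j)).card

/-- `t! · S(h,t)` where `S(h,t)` is the Stirling number of the second kind,
`S(h,t) = (1/t!) ∑_{j=0}^{t} (−1)^{t−j} C(t,j) j^h`. -/
def tS (h t : ℕ) : ℤ :=
  ∑ j ∈ Finset.range (t + 1), (-1 : ℤ) ^ (t - j) * (t.choose j : ℤ) * (j : ℤ) ^ h

/-- Binomial coefficient with integer arguments: `0` whenever `k < 0` or `k > n`. -/
def ichoose (n k : ℤ) : ℤ := if 0 ≤ k ∧ k ≤ n then (n.toNat.choose k.toNat : ℤ) else 0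

set_option linter.unusedSectionVars false
set_option linter.unusedVariables false
section Aux
open Polynomial
set_option linter.unusedSectionVars false




def Dm (F : Type) [Field F] (a : F) : Matrix (Fin 1 ⊕ Fin 1) (Fin 1 ⊕ Fin 1) F :=
  fun i j => match i, j with
  | Sum.inl _, Sum.inl _ => a
  | Sum.inr _, Sum.inr _ => a⁻¹
  | _, _ => 0

def Am (F : Type) [Field F] (b : F) : Matrix (Fin 1 ⊕ Fin 1) (Fin 1 ⊕ Fin 1) F :=
  fun i j => match i, j with
  | Sum.inl _, Sum.inr _ => b
  | Sum.inr _, Sum.inl _ => b⁻¹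
  | _, _ => 0

section TraceFacts
variable {F : Type} [Field F] [Fintype F] [DecidableEq F] {r : ℕ}

lemma char2 (hF : Fintype.card F = 2 ^ r) : CharP F 2 := by
  have h2 : (2 : F) ^ r = 0 := by
    have := FiniteField.cast_card_eq_zero F
    rw [hF] at this; push_cast at this; exact this
  have hr : r ≠ 0 := by
    rintro rfl; rw [pow_zero] at hF
    have := Fintype.one_lt_card_iff_nontrivial (α := F) |>.mpr inferInstance
    omega
  have h2 : (2 : F) = 0 := pow_eq_zero_iff hr |>.mp h2
  have hd : ringChar F ∣ 2 := ringChar.dvd (by exact_mod_cast h2)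
  rcases (Nat.dvd_prime Nat.prime_two).mp hd with h | h
  · exact absurd h CharP.ringChar_ne_one
  · exact h ▸ ringChar.charP F

variable [CharP F 2]

lemma trF_add (x y : F) : trF F r (x + y) = trF F r x + trF F r y := by
  haveI : Fact (Nat.Prime 2) := ⟨Nat.prime_two⟩
  unfold trF
  rw [← Finset.sum_add_distrib]
  exact Finset.sum_congr rfl fun i _ => add_pow_char_pow x y 2 i

lemma trF_sq (hF : Fintype.card F = 2 ^ r) (x : F) : trF F r (x * x) = trF F r x := by
  have key : (∑ i ∈ Finset.range r, x ^ 2 ^ (i + 1)) + x = trF F r x + x := by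
    have h1 : ∑ i ∈ Finset.range (r + 1), x ^ 2 ^ i
        = (∑ i ∈ Finset.range r, x ^ 2 ^ (i + 1)) + x ^ 2 ^ 0 :=
      Finset.sum_range_succ' _ _
    have h2 : ∑ i ∈ Finset.range (r + 1), x ^ 2 ^ i = trF F r x + x ^ 2 ^ r :=
      Finset.sum_range_succ _ _
    have h3 : x ^ 2 ^ r = x := by rw [← hF]; exact FiniteField.pow_card x
    rw [h1, pow_zero, pow_one] at h2
    rw [h2, h3]
  have h4 : ∑ i ∈ Finset.range r, x ^ 2 ^ (i + 1) = trF F r x := add_right_cancel key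
  rw [show trF F r (x * x) = ∑ i ∈ Finset.range r, (x * x) ^ 2 ^ i from rfl, ← h4]
  refine Finset.sum_congr rfl fun i _ => ?_
  rw [← sq, ← pow_mul, pow_succ, mul_comm (2 ^ i) 2, pow_mul]

lemma trF_idem (hF : Fintype.card F = 2 ^ r) (x : F) : trF F r x * trF F r x = trF F r x := by
  haveI : Fact (Nat.Prime 2) := ⟨Nat.prime_two⟩
  have h : trF F r x * trF F r x = trF F r (x * x) := by
    have := map_sum (frobenius F 2) (fun i => x ^ 2 ^ i) (Finset.range r)
    rw [show trF F r x * trF F r x = frobenius F 2 (trF F r x) by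
      rw [frobenius_def]; ring]
    rw [show trF F r x = ∑ i ∈ Finset.range r, x ^ 2 ^ i from rfl, this]
    refine Finset.sum_congr rfl fun i _ => ?_
    rw [frobenius_def]; ring
  rw [h, trF_sq hF]

lemma trF_vals (hF : Fintype.card F = 2 ^ r) (x : F) : trF F r x = 0 ∨ trF F r x = 1 := by
  have h := trF_idem hF x
  have : trF F r x * (trF F r x - 1) = 0 := by ring_nf; rw [mul_comm] at h; linear_combination h
  rcases mul_eq_zero.mp this with h | h
  · exact Or.inl h
  · exact Or.inr (by linear_combination h)


lemma exists_trF_ne (hF : Fintype.card F = 2 ^ r) (hr : 1 ≤ r) : ∃ y : F, trF F r y ≠ 0 := by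
  by_contra h
  push_neg at h
  set p : F[X] := ∑ i ∈ Finset.range r, X ^ 2 ^ i with hp
  have heval : ∀ y : F, p.eval y = 0 := by
    intro y
    have he : p.eval y = trF F r y := by simp [hp, trF, eval_finset_sum]
    rw [he, h]
  have hdeg : p.natDegree < Fintype.card F := by
    have h1 : p.natDegree ≤ 2 ^ (r - 1) := by
      refine Polynomial.natDegree_sum_le_of_forall_le _ _ fun i hi => ?_
      rw [Polynomial.natDegree_X_pow]
      exact Nat.pow_le_pow_right (by norm_num) (by
        have := Finset.mem_range.mp hi; omega)
    rw [hF]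
    calc p.natDegree ≤ 2 ^ (r - 1) := h1
      _ < 2 ^ r := Nat.pow_lt_pow_right (by norm_num) (by omega)
  have hp0 : p = 0 :=
    Polynomial.eq_zero_of_natDegree_lt_card_of_eval_eq_zero p
      (f := (id : F → F)) Function.injective_id (fun y => heval y) hdeg
  have hc : p.coeff (2 ^ (r - 1)) = 1 := by
    rw [hp, Polynomial.finset_sum_coeff]
    rw [Finset.sum_eq_single (r - 1)]
    · rw [Polynomial.coeff_X_pow, if_pos rfl]
    · intro i hi hne
      rw [Polynomial.coeff_X_pow, if_neg]
      intro hpow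
      exact hne (Nat.pow_right_injective (le_refl 2) hpow).symm
    · intro habs
      exact absurd (Finset.mem_range.mpr (by omega)) habs
  rw [hp0] at hc
  simp at hc

lemma fiber_eq (t₀ : F) :
    Finset.univ.filter (fun t : F => t * t + t = t₀ * t₀ + t₀) = {t₀, t₀ + 1} := by
  have h2 : (2 : F) = 0 := by exact_mod_cast CharP.cast_eq_zero F 2
  ext t
  simp only [Finset.mem_filter, Finset.mem_univ, true_and, Finset.mem_insert,
    Finset.mem_singleton]
  constructor
  · intro h
    have hz : (t + t₀) * (t + t₀ + 1) = 0 := by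
      linear_combination h + (t₀ * t₀ + t₀ + t * t₀) * h2
    rcases mul_eq_zero.mp hz with hz | hz
    · left; linear_combination hz - t₀ * h2
    · right; linear_combination hz - (t₀ + 1) * h2
  · rintro (rfl | rfl)
    · rfl
    · linear_combination (t₀ + 1) * h2

lemma fiber_card (t₀ : F) :
    (Finset.univ.filter (fun t : F => t * t + t = t₀ * t₀ + t₀)).card = 2 := by
  rw [fiber_eq]
  rw [Finset.card_insert_of_notMem (by
    simp only [Finset.mem_singleton]
    intro h
    exact one_ne_zero ((left_eq_add).mp h)), Finset.card_singleton]

lemma quad_count (hF : Fintype.card F = 2 ^ r) (hr : 1 ≤ r) (c : F) :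
    (Finset.univ.filter (fun t : F => t * t + t = c)).card
      = if trF F r c = 0 then 2 else 0 := by
  set φ : F → F := fun t => t * t + t with hφ
  set T : Finset F := Finset.univ.image φ with hT
  set K : Finset F := Finset.univ.filter (fun c => trF F r c = 0) with hK
  have hTK : T ⊆ K := by
    intro c hc
    rcases Finset.mem_image.mp hc with ⟨t, -, rfl⟩
    rw [hK, Finset.mem_filter]
    refine ⟨Finset.mem_univ _, ?_⟩
    show trF F r (t * t + t) = 0
    rw [trF_add, trF_sq hF, CharTwo.add_self_eq_zero]
  have hcard2 : Fintype.card F = 2 * T.card := by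
    have h1 := Finset.card_eq_sum_card_image φ Finset.univ
    rw [← Finset.card_univ, h1, ← hT]
    rw [Finset.sum_congr rfl (fun b hb => ?_), Finset.sum_const, smul_eq_mul, mul_comm]
    rcases Finset.mem_image.mp hb with ⟨t₀, -, rfl⟩
    exact fiber_card t₀
  have hKcard : 2 * K.card ≤ Fintype.card F := by
    obtain ⟨y, hy⟩ := exists_trF_ne hF hr
    have hy1 : trF F r y = 1 := (trF_vals hF y).resolve_left hy
    have hinj : K.card ≤ (Finset.univ.filter (fun c => ¬ trF F r c = 0)).card := by
      refine Finset.card_le_card_of_injOn (· + y) (fun c hc => ?_) ?_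
      · simp only [hK, Finset.mem_coe, Finset.mem_filter] at hc
        rw [Finset.mem_coe, Finset.mem_filter]
        refine ⟨Finset.mem_univ _, ?_⟩
        rw [trF_add, hc.2, hy1, zero_add]
        exact one_ne_zero
      · intro a _ b _ hab
        exact add_right_cancel hab
    have := Finset.card_filter_add_card_filter_not
      (s := (Finset.univ : Finset F)) (p := fun c => trF F r c = 0)
    rw [Finset.card_univ] at this
    rw [hK] at hinj ⊢
    omega
  have hTKcard : K.card ≤ T.card := by omega
  have hTeqK : T = K := Finset.eq_of_subset_of_card_le hTK hTKcard
  by_cases h : trF F r c = 0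
  · rw [if_pos h]
    have hcK : c ∈ K := by rw [hK, Finset.mem_filter]; exact ⟨Finset.mem_univ _, h⟩
    rw [← hTeqK] at hcK
    rcases Finset.mem_image.mp hcK with ⟨t₀, -, rfl⟩
    exact fiber_card t₀
  · rw [if_neg h, Finset.card_eq_zero, Finset.filter_eq_empty_iff]
    intro t _ ht
    apply h
    have : c ∈ T := Finset.mem_image.mpr ⟨t, Finset.mem_univ _, ht⟩
    rw [hTeqK, hK, Finset.mem_filter] at this
    exact this.2


section Mat
variable {F : Type} [Field F] [Fintype F] [DecidableEq F]

lemma theta1 (v : Fin 1 ⊕ Fin 1 → F) :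
    thetaPlus F 1 v = v (Sum.inl 0) * v (Sum.inr 0) := by
  simp [thetaPlus]

lemma mulVec1 (w : Matrix (Fin 1 ⊕ Fin 1) (Fin 1 ⊕ Fin 1) F) (x : Fin 1 ⊕ Fin 1 → F)
    (i : Fin 1 ⊕ Fin 1) :
    w.mulVec x i = w i (Sum.inl 0) * x (Sum.inl 0) + w i (Sum.inr 0) * x (Sum.inr 0) := by
  simp [Matrix.mulVec, dotProduct, Fintype.sum_sum_type]

lemma trace1 (w : Matrix (Fin 1 ⊕ Fin 1) (Fin 1 ⊕ Fin 1) F) :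
    Matrix.trace w = w (Sum.inl 0) (Sum.inl 0) + w (Sum.inr 0) (Sum.inr 0) := by
  simp [Matrix.trace, Matrix.diag, Fintype.sum_sum_type]

lemma matext {w w' : Matrix (Fin 1 ⊕ Fin 1) (Fin 1 ⊕ Fin 1) F}
    (h11 : w (Sum.inl 0) (Sum.inl 0) = w' (Sum.inl 0) (Sum.inl 0))
    (h12 : w (Sum.inl 0) (Sum.inr 0) = w' (Sum.inl 0) (Sum.inr 0))
    (h21 : w (Sum.inr 0) (Sum.inl 0) = w' (Sum.inr 0) (Sum.inl 0))
    (h22 : w (Sum.inr 0) (Sum.inr 0) = w' (Sum.inr 0) (Sum.inr 0)) : w = w' := by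
  ext i j
  rcases i with i | i <;> rcases j with j | j <;>
    rw [show i = 0 from Subsingleton.elim i 0, show j = 0 from Subsingleton.elim j 0] <;>
    assumption

lemma Dm_mul (a a' : F) (ha : a ≠ 0) (h : a' = a⁻¹) : Dm F a * Dm F a' = 1 := by
  subst h
  refine matext ?_ ?_ ?_ ?_ <;>
    simp [Matrix.mul_apply, Fintype.sum_sum_type, Dm, Matrix.one_apply,
      mul_inv_cancel₀ ha, inv_mul_cancel₀ ha, inv_inv]

lemma Am_mul (b : F) (hb : b ≠ 0) : Am F b * Am F b = 1 := by
  refine matext ?_ ?_ ?_ ?_ <;>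
    simp [Matrix.mul_apply, Fintype.sum_sum_type, Am, Matrix.one_apply,
      mul_inv_cancel₀ hb, inv_mul_cancel₀ hb, inv_inv]

lemma Dm_isUnit (a : F) (ha : a ≠ 0) : IsUnit (Dm F a) := by
  refine ⟨⟨Dm F a, Dm F a⁻¹, Dm_mul a a⁻¹ ha rfl, ?_⟩, rfl⟩
  have := Dm_mul a⁻¹ a (inv_ne_zero ha) (by rw [inv_inv])
  exact this

lemma Am_isUnit (b : F) (hb : b ≠ 0) : IsUnit (Am F b) :=
  ⟨⟨Am F b, Am F b, Am_mul b hb, Am_mul b hb⟩, rfl⟩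

lemma mem_O_iff (w : Matrix (Fin 1 ⊕ Fin 1) (Fin 1 ⊕ Fin 1) F) [CharP F 2] :
    w ∈ OplusGrp F 1 ↔
      (∃ a, a ≠ 0 ∧ w = Dm F a) ∨ (∃ b, b ≠ 0 ∧ w = Am F b) := by
  classical
  have h2 : (2 : F) = 0 := by exact_mod_cast CharP.cast_eq_zero F 2
  constructor
  · intro hw
    rw [OplusGrp, Finset.mem_filter] at hw
    obtain ⟨-, hu, hθ⟩ := hw
    set a := w (Sum.inl 0) (Sum.inl 0) with hadef
    set b := w (Sum.inl 0) (Sum.inr 0) with hbdef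
    set c := w (Sum.inr 0) (Sum.inl 0) with hcdef
    set d := w (Sum.inr 0) (Sum.inr 0) with hddef
    have h1 : a * c = 0 := by
      have := hθ (Pi.single (Sum.inl 0) 1)
      simpa [theta1, mulVec1, Pi.single_apply] using this
    have hbd : b * d = 0 := by
      have := hθ (Pi.single (Sum.inr 0) 1)
      simpa [theta1, mulVec1, Pi.single_apply] using this
    have h3 : (a + b) * (c + d) = 1 := by
      have := hθ (fun _ => 1)
      simpa [theta1, mulVec1] using this
    have had : a * d + b * c = 1 := by linear_combination h3 - h1 - hbd
    by_cases ha : a = 0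
    · right
      rw [ha, zero_mul, zero_add] at had
      have hb : b ≠ 0 := by intro h; rw [h, zero_mul] at had; exact one_ne_zero had.symm
      have hc : c = b⁻¹ := eq_inv_of_mul_eq_one_left (by rw [mul_comm]; exact had)
      have hd : d = 0 := by
        rcases mul_eq_zero.mp hbd with h | h
        · exact absurd h hb
        · exact h
      refine ⟨b, hb, matext ?_ ?_ ?_ ?_⟩ <;> simp [Am, ← hadef, ← hbdef, ← hcdef, ← hddef, ha, hc, hd]
    · left
      have hc : c = 0 := by
        rcases mul_eq_zero.mp h1 with h | h
        · exact absurd h ha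
        · exact h
      rw [hc, mul_zero, add_zero] at had
      have hd : d = a⁻¹ := eq_inv_of_mul_eq_one_left (by rw [mul_comm]; exact had)
      have hb : b = 0 := by
        rcases mul_eq_zero.mp hbd with h | h
        · exact h
        · exfalso; rw [hd] at h; exact inv_ne_zero ha h
      refine ⟨a, ha, matext ?_ ?_ ?_ ?_⟩ <;> simp [Dm, ← hadef, ← hbdef, ← hcdef, ← hddef, hb, hc, hd]
  · rintro (⟨a, ha, rfl⟩ | ⟨b, hb, rfl⟩) <;> rw [OplusGrp, Finset.mem_filter]
    · refine ⟨Finset.mem_univ _, Dm_isUnit a ha, fun x => ?_⟩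
      rw [theta1, theta1, mulVec1, mulVec1]
      show (a * x (Sum.inl 0) + 0 * x (Sum.inr 0)) * (0 * x (Sum.inl 0) + a⁻¹ * x (Sum.inr 0)) = _
      field_simp
      ring
    · refine ⟨Finset.mem_univ _, Am_isUnit b hb, fun x => ?_⟩
      rw [theta1, theta1, mulVec1, mulVec1]
      show (0 * x (Sum.inl 0) + b * x (Sum.inr 0)) * (b⁻¹ * x (Sum.inl 0) + 0 * x (Sum.inr 0)) = _
      field_simp
      ring

end Mat

section Count
variable {F : Type} [Field F] [Fintype F] [DecidableEq F] {r : ℕ}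

lemma trace_Dm (a : F) : Matrix.trace (Dm F a) = a + a⁻¹ := by rw [trace1]; rfl

lemma trace_Am (b : F) : Matrix.trace (Am F b) = 0 := by
  rw [trace1]; show (0 : F) + 0 = 0; rw [add_zero]

lemma Dm_inj : Function.Injective (Dm F) := fun a a' h =>
  congrFun (congrFun h (Sum.inl 0)) (Sum.inl 0)

lemma Am_inj : Function.Injective (Am F) := fun b b' h =>
  congrFun (congrFun h (Sum.inl 0)) (Sum.inr 0)

variable [CharP F 2]

lemma S0_eq :
    (OplusGrp F 1).filter (fun w => Matrix.trace w = 0)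
      = insert (Dm F 1) ((Finset.univ.filter (fun b : F => b ≠ 0)).image (Am F)) := by
  have h2 : (2 : F) = 0 := by exact_mod_cast CharP.cast_eq_zero F 2
  ext w
  simp only [Finset.mem_filter, Finset.mem_insert, Finset.mem_image, Finset.mem_univ, true_and]
  constructor
  · rintro ⟨hw, htr⟩
    rcases (mem_O_iff w).mp hw with ⟨a, ha, rfl⟩ | ⟨b, hb, rfl⟩
    · left
      rw [trace_Dm] at htr
      have h' : a * (a + a⁻¹) = 0 := by rw [htr, mul_zero]
      rw [mul_add, mul_inv_cancel₀ ha] at h'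
      have hsq : (a + 1) * (a + 1) = 0 := by linear_combination h' + a * h2
      have h1 : a + 1 = 0 := by
        rcases mul_eq_zero.mp hsq with h | h <;> exact h
      have : a = 1 := by linear_combination h1 - h2
      rw [this]
    · right; exact ⟨b, hb, rfl⟩
  · rintro (rfl | ⟨b, hb, rfl⟩)
    · refine ⟨(mem_O_iff _).mpr (Or.inl ⟨1, one_ne_zero, rfl⟩), ?_⟩
      rw [trace_Dm, inv_one]
      linear_combination h2
    · exact ⟨(mem_O_iff _).mpr (Or.inr ⟨b, hb, rfl⟩), trace_Am b⟩

lemma Sb_eq (β : F) (hβ : β ≠ 0) :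
    (OplusGrp F 1).filter (fun w => Matrix.trace w = β)
      = (Finset.univ.filter (fun a : F => a * a + β * a + 1 = 0)).image (Dm F) := by
  have h2 : (2 : F) = 0 := by exact_mod_cast CharP.cast_eq_zero F 2
  ext w
  simp only [Finset.mem_filter, Finset.mem_image, Finset.mem_univ, true_and]
  constructor
  · rintro ⟨hw, htr⟩
    rcases (mem_O_iff w).mp hw with ⟨a, ha, rfl⟩ | ⟨b, hb, rfl⟩
    · refine ⟨a, ?_, rfl⟩
      rw [trace_Dm] at htr
      have h' : a * (a + a⁻¹) = a * β := by rw [htr]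
      rw [mul_add, mul_inv_cancel₀ ha] at h'
      linear_combination h' + β * a * h2
    · exfalso; rw [trace_Am] at htr; exact hβ htr.symm
  · rintro ⟨a, hroot, rfl⟩
    have ha : a ≠ 0 := by
      rintro rfl
      rw [mul_zero, mul_zero, zero_add, zero_add] at hroot
      exact one_ne_zero hroot
    refine ⟨(mem_O_iff _).mpr (Or.inl ⟨a, ha, rfl⟩), ?_⟩
    rw [trace_Dm]
    have key : a * (a + a⁻¹) = a * β := by
      rw [mul_add, mul_inv_cancel₀ ha]
      linear_combination hroot - a * β * h2
    exact mul_left_cancel₀ ha key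

lemma roots_eq (β : F) (hβ : β ≠ 0) :
    Finset.univ.filter (fun a : F => a * a + β * a + 1 = 0)
      = (Finset.univ.filter (fun t : F => t * t + t = β⁻¹ * β⁻¹)).image (fun t => β * t) := by
  have h2 : (2 : F) = 0 := by exact_mod_cast CharP.cast_eq_zero F 2
  have hinv : β * β⁻¹ = 1 := mul_inv_cancel₀ hβ
  ext a
  simp only [Finset.mem_filter, Finset.mem_image, Finset.mem_univ, true_and]
  constructor
  · intro h
    refine ⟨β⁻¹ * a, ?_, by rw [← mul_assoc, hinv, one_mul]⟩
    linear_combination (β⁻¹ * β⁻¹) * h - β⁻¹ * a * hinv - β⁻¹ * β⁻¹ * h2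
  · rintro ⟨t, ht, rfl⟩
    linear_combination β * β * ht + (β * β⁻¹ + 1) * hinv + h2

lemma roots_card (hF : Fintype.card F = 2 ^ r) (hr : 1 ≤ r) (β : F) (hβ : β ≠ 0) :
    (Finset.univ.filter (fun a : F => a * a + β * a + 1 = 0)).card
      = if trF F r β⁻¹ = 0 then 2 else 0 := by
  rw [roots_eq β hβ,
    Finset.card_image_of_injective _ (mul_right_injective₀ hβ),
    quad_count hF hr, trF_sq hF β⁻¹]

end Count

end TraceFacts
end Aux

theorem stmt11 (r : ℕ) (hr : 1 ≤ r) (F : Type) [Field F] [Fintype F] [DecidableEq F]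
    (hF : Fintype.card F = 2 ^ r) (β : F) :
    (β = 0 → ((OplusGrp F 1).filter (fun w => Matrix.trace w = β)).card = 2 ^ r) ∧
    (β ≠ 0 → trF F r β⁻¹ = 0 →
      ((OplusGrp F 1).filter (fun w => Matrix.trace w = β)).card = 2) ∧
    (β ≠ 0 → trF F r β⁻¹ = 1 →
      ((OplusGrp F 1).filter (fun w => Matrix.trace w = β)).card = 0) := by
  haveI : CharP F 2 := char2 hF
  refine ⟨?_, ?_, ?_⟩
  · rintro rfl
    rw [S0_eq, Finset.card_insert_of_notMem, Finset.card_image_of_injective _ Am_inj]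
    · have hfc : (Finset.univ.filter (fun b : F => b ≠ 0)).card = 2 ^ r - 1 := by
        rw [Finset.filter_ne', Finset.card_erase_of_mem (Finset.mem_univ 0),
          Finset.card_univ, hF]
      rw [hfc]
      have : 1 ≤ 2 ^ r := Nat.one_le_two_pow
      omega
    · intro hmem
      rcases Finset.mem_image.mp hmem with ⟨b, -, hb⟩
      have := congrFun (congrFun hb (Sum.inl 0)) (Sum.inl 0)
      simp [Am, Dm] at this
  · intro hβ h0
    rw [Sb_eq β hβ, Finset.card_image_of_injective _ Dm_inj, roots_card hF hr β hβ, if_pos h0]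
  · intro hβ h1
    rw [Sb_eq β hβ, Finset.card_image_of_injective _ Dm_inj, roots_card hF hr β hβ, if_neg]
    rw [h1]
    exact one_ne_zero
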